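/- Let v_1, …, v_d ∈ ℤ^n be linearly independent integer vectors (n ≥ d). Then the set of lattice points in the relative interior of the real cone generated by v_1, …, v_d is the disjoint union, over all atomic lattice points z in the half-open fundamental simplex, of the translated discrete cones z + cone_ℤ(v_1, …, v_{level(z)}). -/

import Mathlib

/-- A coefficient vector `mu ∈ ℝ^d_{>0}` (of a lattice point) is atomic iff
`mu j ≤ 1` for all indices `j` preceding its level `⌈∑ i, mu i⌉`. -/
def AtomicCoeff {d : ℕ} (mu : Fin d → ℝ) : Prop :=
  ∀ j : Fin d, ((j : ℕ) + 1 : ℤ) < ⌈∑ i, mu i⌉ → mu j ≤ 1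

lemma forced_mu {lam : ℝ} {m : ℤ} (h0 : 0 < lam - m) (h1 : lam - m ≤ 1) : m = ⌈lam⌉ - 1 := by
  have h2 : (m : ℝ) < lam := by linarith
  have h3 : lam ≤ ((m + 1 : ℤ) : ℝ) := by push_cast; linarith
  have h4 := Int.lt_ceil.mpr h2
  have h5 := Int.ceil_le.mpr h3
  omega

lemma unique_decomp {d : ℕ} (lam : Fin d → ℝ)
    (α₁ α₂ : Fin d → ℝ) (μ₁ μ₂ : Fin d → ℕ)
    (hp1 : ∀ i, 0 < α₁ i) (hp2 : ∀ i, 0 < α₂ i)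
    (ha1 : AtomicCoeff α₁) (ha2 : AtomicCoeff α₂)
    (hs1 : ∀ i : Fin d, ⌈∑ j, α₁ j⌉ < (i : ℕ) + 1 → μ₁ i = 0)
    (hs2 : ∀ i : Fin d, ⌈∑ j, α₂ j⌉ < (i : ℕ) + 1 → μ₂ i = 0)
    (he1 : ∀ i, lam i = α₁ i + μ₁ i) (he2 : ∀ i, lam i = α₂ i + μ₂ i) :
    α₁ = α₂ := by
  -- first, levels are equal
  have key : ∀ (β₁ β₂ : Fin d → ℝ) (ν₁ ν₂ : Fin d → ℕ),
      (∀ i, 0 < β₁ i) → (∀ i, 0 < β₂ i) → AtomicCoeff β₂ →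
      (∀ i : Fin d, ⌈∑ j, β₁ j⌉ < (i : ℕ) + 1 → ν₁ i = 0) →
      (∀ i, lam i = β₁ i + ν₁ i) → (∀ i, lam i = β₂ i + ν₂ i) →
      ¬ (⌈∑ j, β₁ j⌉ < ⌈∑ j, β₂ j⌉) := by
    intro β₁ β₂ ν₁ ν₂ hq1 hq2 hb2 ht1 hf1 hf2 hlt
    -- termwise ν₁ ≤ ν₂
    have hterm : ∀ i, (ν₁ i : ℝ) ≤ (ν₂ i : ℝ) := by
      intro i
      by_cases hi : ⌈∑ j, β₁ j⌉ < (i : ℕ) + 1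
      · rw [ht1 i hi]; exact_mod_cast Nat.zero_le _
      · push_neg at hi
        have hi2 : ((i : ℕ) + 1 : ℤ) < ⌈∑ j, β₂ j⌉ := by omega
        have hforced : (ν₂ i : ℤ) = ⌈lam i⌉ - 1 := by
          have h0 : 0 < lam i - ((ν₂ i : ℤ) : ℝ) := by
            have := hq2 i; have := hf2 i; push_cast; linarith
          have h1 : lam i - ((ν₂ i : ℤ) : ℝ) ≤ 1 := by
            have := hb2 i hi2; have := hf2 i; push_cast; linarith
          exact forced_mu h0 h1
        have hlt1 : ((ν₁ i : ℤ) : ℝ) < lam i := by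
          have := hq1 i; have := hf1 i; push_cast; linarith
        have : (ν₁ i : ℤ) < ⌈lam i⌉ := Int.lt_ceil.mpr hlt1
        have : (ν₁ i : ℤ) ≤ (ν₂ i : ℤ) := by omega
        exact_mod_cast this
    have hsum : ∑ j, β₂ j ≤ ∑ j, β₁ j := by
      have h1 : ∑ j, β₁ j = ∑ j, lam j - ∑ j, (ν₁ j : ℝ) := by
        rw [← Finset.sum_sub_distrib]; exact Finset.sum_congr rfl fun j _ => by
          have := hf1 j; linarith
      have h2 : ∑ j, β₂ j = ∑ j, lam j - ∑ j, (ν₂ j : ℝ) := by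
        rw [← Finset.sum_sub_distrib]; exact Finset.sum_congr rfl fun j _ => by
          have := hf2 j; linarith
      have h3 : ∑ j, (ν₁ j : ℝ) ≤ ∑ j, (ν₂ j : ℝ) :=
        Finset.sum_le_sum fun j _ => hterm j
      linarith
    -- but β₂ sum > ⌈β₂⌉ - 1 ≥ ⌈β₁⌉ ≥ β₁ sum
    have h4 : ∑ j, β₁ j ≤ (⌈∑ j, β₁ j⌉ : ℝ) := Int.le_ceil _
    have h5 : ((⌈∑ j, β₂ j⌉ : ℤ) : ℝ) - 1 < ∑ j, β₂ j := by
      by_contra h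
      push_neg at h
      have : ⌈∑ j, β₂ j⌉ ≤ ⌈∑ j, β₂ j⌉ - 1 := Int.ceil_le.mpr (by push_cast; linarith)
      omega
    have h6 : ((⌈∑ j, β₁ j⌉ : ℤ) : ℝ) ≤ ((⌈∑ j, β₂ j⌉ : ℤ) : ℝ) - 1 := by
      have : (⌈∑ j, β₁ j⌉ : ℤ) ≤ ⌈∑ j, β₂ j⌉ - 1 := by omega
      exact_mod_cast this
    linarith
  have hk : ⌈∑ j, α₁ j⌉ = ⌈∑ j, α₂ j⌉ := by
    have h1 := key α₁ α₂ μ₁ μ₂ hp1 hp2 ha2 hs1 he1 he2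
    have h2 := key α₂ α₁ μ₂ μ₁ hp2 hp1 ha1 hs2 he2 he1
    omega
  set k := ⌈∑ j, α₂ j⌉ with hkdef
  -- ν equal off the level index
  have hne : ∀ j : Fin d, ((j : ℕ) + 1 : ℤ) ≠ k → μ₁ j = μ₂ j := by
    intro j hj
    rcases lt_or_gt_of_ne hj with h | h
    · -- forced on both sides
      have f1 : (μ₁ j : ℤ) = ⌈lam j⌉ - 1 := by
        refine forced_mu ?_ ?_
        · have := hp1 j; have := he1 j; push_cast; linarith
        · have := ha1 j (by rw [hk]; exact h); have := he1 j; push_cast; linarith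
      have f2 : (μ₂ j : ℤ) = ⌈lam j⌉ - 1 := by
        refine forced_mu ?_ ?_
        · have := hp2 j; have := he2 j; push_cast; linarith
        · have := ha2 j h; have := he2 j; push_cast; linarith
      omega
    · have z1 : μ₁ j = 0 := hs1 j (by omega)
      have z2 : μ₂ j = 0 := hs2 j (by omega)
      rw [z1, z2]
  have hmu : ∀ j, μ₁ j = μ₂ j := by
    intro i
    by_cases hi : ((i : ℕ) + 1 : ℤ) = k
    · -- the sum argument
      have hsingle : ∑ j, (α₁ j - α₂ j) = α₁ i - α₂ i := by
        refine Finset.sum_eq_single i (fun j _ hji => ?_) (by simp)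
        have hjk : ((j : ℕ) + 1 : ℤ) ≠ k := by
          intro hc
          apply hji
          apply Fin.ext
          have : ((j : ℕ) : ℤ) = ((i : ℕ) : ℤ) := by omega
          exact_mod_cast this
        have := hne j hjk
        have e1 := he1 j; have e2 := he2 j
        rw [this] at e1
        linarith
      have hd12 : α₁ i - α₂ i = (μ₂ i : ℝ) - (μ₁ i : ℝ) := by
        have := he1 i; have := he2 i; linarith
      have hsub : ∑ j, (α₁ j - α₂ j) = ∑ j, α₁ j - ∑ j, α₂ j :=
        Finset.sum_sub_distrib _ _
      -- both sums lie in (k-1, k]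
      have b1 : ∑ j, α₁ j ≤ (k : ℝ) := by
        have := Int.le_ceil (∑ j, α₁ j); rw [hk] at this; exact_mod_cast this
      have b2 : ∑ j, α₂ j ≤ (k : ℝ) := by
        have := Int.le_ceil (∑ j, α₂ j); exact_mod_cast this
      have c1 : (k : ℝ) - 1 < ∑ j, α₁ j := by
        by_contra h; push_neg at h
        have : ⌈∑ j, α₁ j⌉ ≤ k - 1 := Int.ceil_le.mpr (by push_cast; linarith)
        omega
      have c2 : (k : ℝ) - 1 < ∑ j, α₂ j := by
        by_contra h; push_neg at h
        have : ⌈∑ j, α₂ j⌉ ≤ k - 1 := Int.ceil_le.mpr (by push_cast; linarith)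
        omega
      have habs1 : ((μ₂ i : ℤ) : ℝ) - ((μ₁ i : ℤ) : ℝ) < 1 := by
        push_cast; linarith [hsingle, hsub, hd12]
      have habs2 : -1 < ((μ₂ i : ℤ) : ℝ) - ((μ₁ i : ℤ) : ℝ) := by
        push_cast; linarith [hsingle, hsub, hd12]
      have g1 : (μ₂ i : ℤ) - (μ₁ i : ℤ) < 1 := by exact_mod_cast habs1
      have g2 : (-1 : ℤ) < (μ₂ i : ℤ) - (μ₁ i : ℤ) := by exact_mod_cast habs2
      omega
    · exact hne i hi
  funext i
  have e1 := he1 i; have e2 := he2 i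
  rw [hmu i] at e1
  linarith

lemma exists_decomp {d : ℕ} (lam : Fin d → ℝ) (hlam : ∀ i, 0 < lam i) :
    ∃ (α : Fin d → ℝ) (μ : Fin d → ℕ),
      (∀ i, 0 < α i) ∧ (∑ i, α i ≤ (d : ℝ)) ∧ AtomicCoeff α ∧
      (∀ i : Fin d, ⌈∑ j, α j⌉ < (i : ℕ) + 1 → μ i = 0) ∧
      (∀ i, lam i = α i + μ i) := by
  rcases Nat.eq_zero_or_pos d with hd | hd
  · subst hd
    exact ⟨lam, 0, fun i => i.elim0, by simp, fun i => i.elim0, fun i => i.elim0,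
      fun i => i.elim0⟩
  set c : ℕ → ℤ := fun j => if h : j < d then ⌈lam ⟨j, h⟩⌉ - 1 else 0 with hcdef
  have hcc : ∀ i : Fin d, c (i : ℕ) = ⌈lam i⌉ - 1 := by
    intro i; simp [hcdef, i.isLt]
  have hc : ∀ j, 0 ≤ c j := by
    intro j
    by_cases h : j < d
    · have h1 : 0 < ⌈lam ⟨j, h⟩⌉ := Int.ceil_pos.mpr (hlam _)
      show 0 ≤ if h : j < d then ⌈lam ⟨j, h⟩⌉ - 1 else 0
      rw [dif_pos h]
      omega
    · show 0 ≤ if h : j < d then ⌈lam ⟨j, h⟩⌉ - 1 else 0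
      rw [dif_neg h]
  set G : ℕ → ℤ := fun m => ⌈∑ i, lam i⌉ - (∑ j ∈ Finset.range m, c j) - (m + 1) with hGdef
  have hG0 : 0 ≤ G 0 := by
    have hne : (Finset.univ : Finset (Fin d)).Nonempty := ⟨⟨0, hd⟩, Finset.mem_univ _⟩
    have hpos : 0 < ∑ i, lam i := Finset.sum_pos (fun i _ => hlam i) hne
    have h1 : 0 < ⌈∑ i, lam i⌉ := Int.ceil_pos.mpr hpos
    show 0 ≤ ⌈∑ i, lam i⌉ - (∑ j ∈ Finset.range 0, c j) - ((0 : ℕ) + 1)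
    rw [Finset.sum_range_zero]
    push_cast
    omega
  have hGsucc : ∀ m, G (m + 1) = G m - c m - 1 := by
    intro m
    show ⌈∑ i, lam i⌉ - (∑ j ∈ Finset.range (m + 1), c j) - ((m + 1 : ℕ) + 1) =
      (⌈∑ i, lam i⌉ - (∑ j ∈ Finset.range m, c j) - (m + 1)) - c m - 1
    rw [Finset.sum_range_succ]
    push_cast
    ring
  have hGd : G d < 0 := by
    have h1 : ∑ j ∈ Finset.range d, c j = ∑ i : Fin d, (⌈lam i⌉ - 1) := by
      rw [← Fin.sum_univ_eq_sum_range (fun j => c j) d]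
      exact Finset.sum_congr rfl fun i _ => hcc i
    have hsum : ∑ i, lam i ≤ (((∑ j ∈ Finset.range d, c j) + d : ℤ) : ℝ) := by
      rw [h1]
      push_cast
      rw [Finset.sum_sub_distrib]
      have h2 : ∑ i, lam i ≤ ∑ i : Fin d, ((⌈lam i⌉ : ℝ)) :=
        Finset.sum_le_sum fun i _ => Int.le_ceil _
      simp
      linarith
    have h3 := Int.ceil_le.mpr hsum
    show ⌈∑ i, lam i⌉ - (∑ j ∈ Finset.range d, c j) - ((d : ℕ) + 1) < 0
    omega
  have hGexists : ∃ m, G m < 0 := ⟨d, hGd⟩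
  classical
  set k' := Nat.find hGexists with hk'def
  have hk'spec : G k' < 0 := Nat.find_spec hGexists
  have hk'pos : 0 < k' := by
    rcases Nat.eq_zero_or_pos k' with h | h
    · rw [h] at hk'spec; omega
    · exact h
  set K := k' - 1 with hKdef
  have hKsucc : K + 1 = k' := by omega
  have hGK : 0 ≤ G K := by
    have := Nat.find_min hGexists (show K < k' by omega)
    omega
  have hGK1 : G (K + 1) < 0 := by rw [hKsucc]; exact hk'spec
  have hk'led : k' ≤ d := Nat.find_le hGd
  have hKd : K < d := by omega
  have hGKcK : G K ≤ c K := by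
    have := hGsucc K
    omega
  set μ : Fin d → ℕ := fun i =>
    if (i : ℕ) < K then (c i).toNat else if (i : ℕ) = K then (G K).toNat else 0 with hμdef
  set α : Fin d → ℝ := fun i => lam i - μ i with hαdef
  have hμint : ∀ i : Fin d, (μ i : ℤ) =
      if (i : ℕ) < K then c i else if (i : ℕ) = K then G K else 0 := by
    intro i
    by_cases h1 : (i : ℕ) < K
    · simp [hμdef, h1, Int.toNat_of_nonneg (hc i)]
    · by_cases h2 : (i : ℕ) = K
      · simp [hμdef, h1, h2, Int.toNat_of_nonneg hGK]
      · simp [hμdef, h1, h2]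
  set M : ℤ := ∑ i : Fin d, (μ i : ℤ) with hMdef
  have hM : M = ⌈∑ i, lam i⌉ - (K + 1) := by
    have h1 : M = ∑ j ∈ Finset.range d, (if j < K then c j else if j = K then G K else 0) := by
      rw [hMdef, ← Fin.sum_univ_eq_sum_range
        (fun j => (if j < K then c j else if j = K then G K else 0)) d]
      exact Finset.sum_congr rfl fun i _ => hμint i
    have h2 : ∑ j ∈ Finset.range d, (if j < K then c j else if j = K then G K else 0) =
        ∑ j ∈ Finset.range (K + 1), (if j < K then c j else if j = K then G K else 0) := by
      symm
      refine Finset.sum_subset (Finset.range_subset_range.mpr (by omega)) ?_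
      intro j hj hjn
      simp only [Finset.mem_range] at hj hjn
      rw [if_neg (by omega), if_neg (by omega)]
    have h3 : ∑ j ∈ Finset.range (K + 1), (if j < K then c j else if j = K then G K else 0) =
        (∑ j ∈ Finset.range K, c j) + G K := by
      rw [Finset.sum_range_succ, if_neg (lt_irrefl K), if_pos rfl]
      congr 1
      exact Finset.sum_congr rfl fun j hj => if_pos (Finset.mem_range.mp hj)
    have h4 : G K = ⌈∑ i, lam i⌉ - (∑ j ∈ Finset.range K, c j) - (K + 1) := rfl
    omega
  have hceil : ⌈∑ i, α i⌉ = (K : ℤ) + 1 := by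
    have h1 : ∑ i, α i = ∑ i, lam i - (M : ℝ) := by
      rw [hMdef]
      push_cast
      rw [← Finset.sum_sub_distrib]
    rw [h1, Int.ceil_sub_intCast, hM]
    push_cast
    ring
  refine ⟨α, μ, ?_, ?_, ?_, ?_, ?_⟩
  · intro i
    have hlt : ((μ i : ℤ) : ℝ) < lam i := by
      rw [hμint i]
      by_cases h1 : (i : ℕ) < K
      · rw [if_pos h1, hcc i]
        have h4 : (⌈lam i⌉ : ℝ) < lam i + 1 := by
          exact_mod_cast Int.ceil_lt_add_one (lam i)
        push_cast
        linarith
      · rw [if_neg h1]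
        by_cases h2 : (i : ℕ) = K
        · rw [if_pos h2]
          have hle : G K ≤ ⌈lam i⌉ - 1 := by
            have h5 := hcc i
            rw [h2] at h5
            omega
          have h3 : ((G K : ℤ) : ℝ) ≤ (⌈lam i⌉ : ℝ) - 1 := by exact_mod_cast hle
          have h4 : (⌈lam i⌉ : ℝ) < lam i + 1 := by
            exact_mod_cast Int.ceil_lt_add_one (lam i)
          linarith
        · rw [if_neg h2]
          push_cast
          exact hlam i
    show 0 < lam i - (μ i : ℝ)
    push_cast at hlt
    linarith
  · have h1 : ∑ i, α i ≤ ((((K : ℤ) + 1) : ℤ) : ℝ) := by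
      rw [← hceil]; exact Int.le_ceil _
    have h2 : ((((K : ℤ) + 1) : ℤ) : ℝ) ≤ (d : ℝ) := by
      have h3 : (K : ℤ) + 1 ≤ (d : ℤ) := by omega
      exact_mod_cast h3
    linarith
  · intro j hj
    rw [hceil] at hj
    have hjK : (j : ℕ) < K := by omega
    have h5 : (μ j : ℤ) = ⌈lam j⌉ - 1 := by
      rw [hμint j, if_pos hjK]
      exact hcc j
    have h1 : (μ j : ℝ) = (⌈lam j⌉ : ℝ) - 1 := by exact_mod_cast h5
    have h2 : lam j ≤ (⌈lam j⌉ : ℝ) := Int.le_ceil _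
    show lam j - (μ j : ℝ) ≤ 1
    linarith
  · intro i hi
    rw [hceil] at hi
    have h1 : ¬ (i : ℕ) < K := by omega
    have h2 : ¬ (i : ℕ) = K := by omega
    simp [hμdef, h1, h2]
  · intro i
    show lam i = (lam i - (μ i : ℝ)) + (μ i : ℝ)
    ring

/-- Partition theorem: for linearly independent `v 0, …, v (d-1) ∈ ℤ^n`, the lattice
points in the relative interior of the real cone over the `v i` are exactly the points
of the translated discrete cones `z + cone_ℤ(v 0, …, v (level z - 1))` for atomic
lattice points `z` of the half-open fundamental simplex, and this union is disjoint:
every such lattice point lies in the discrete cone of a *unique* atomic point. -/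
theorem partition_open_cone (d n : ℕ) (hdn : d ≤ n) (v : Fin d → Fin n → ℤ)
    (hv : LinearIndependent ℝ fun i => fun j => ((v i j : ℝ))) (x : Fin n → ℤ) :
    (∃ lam : Fin d → ℝ, (∀ i, 0 < lam i) ∧
        ∀ j : Fin n, (x j : ℝ) = ∑ i, lam i * (v i j : ℝ)) ↔
      ∃! α : Fin d → ℝ,
        ((∀ i, 0 < α i) ∧ (∑ i, α i ≤ (d : ℝ)) ∧
          (∀ j : Fin n, ∃ z : ℤ, (∑ i, α i * (v i j : ℝ)) = (z : ℝ)) ∧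
          AtomicCoeff α) ∧
        ∃ μ : Fin d → ℕ, (∀ i : Fin d, ⌈∑ j, α j⌉ < (i : ℕ) + 1 → μ i = 0) ∧
          ∀ j : Fin n, (x j : ℝ) = (∑ i, α i * (v i j : ℝ)) + ∑ i, (μ i : ℝ) * (v i j : ℝ) := by
  have hinj : ∀ a b : Fin d → ℝ,
      (∀ j, ∑ i, a i * (v i j : ℝ) = ∑ i, b i * (v i j : ℝ)) → a = b := by
    intro a b hab
    rw [Fintype.linearIndependent_iff] at hv
    have h0 : (∑ i, (a i - b i) • (fun j => ((v i j : ℝ)))) = 0 := by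
      funext j
      have h1 : (∑ i, (a i - b i) • (fun j => ((v i j : ℝ)))) j =
          ∑ i, (a i - b i) * (v i j : ℝ) := by
        rw [Finset.sum_apply]
        rfl
      have h2 : ∑ i, (a i - b i) * (v i j : ℝ) = 0 := by
        have h3 := hab j
        simp only [sub_mul]
        rw [Finset.sum_sub_distrib]
        linarith [h3]
      rw [Pi.zero_apply, h1, h2]
    funext i
    have := hv _ h0 i
    linarith
  constructor
  · rintro ⟨lam, hlam, hx⟩
    obtain ⟨α, μ, hpos, hle, hatom, hsupp, he⟩ := exists_decomp lam hlam
    have heq : ∀ j : Fin n, (x j : ℝ) =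
        (∑ i, α i * (v i j : ℝ)) + ∑ i, (μ i : ℝ) * (v i j : ℝ) := by
      intro j
      rw [hx j, ← Finset.sum_add_distrib]
      exact Finset.sum_congr rfl fun i _ => by rw [he i]; ring
    refine ⟨α, ⟨⟨hpos, hle, ?_, hatom⟩, μ, hsupp, heq⟩, ?_⟩
    · intro j
      refine ⟨x j - ∑ i, (μ i : ℤ) * v i j, ?_⟩
      have h1 := heq j
      push_cast
      linarith [h1]
    · rintro β ⟨⟨hbpos, _, _, hbatom⟩, ν, hνsupp, hbeq⟩
      have hlameq : (fun i => β i + (ν i : ℝ)) = fun i => α i + (μ i : ℝ) := by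
        apply hinj
        intro j
        have h1 : ∑ i, (β i + (ν i : ℝ)) * (v i j : ℝ) = (x j : ℝ) := by
          rw [hbeq j, ← Finset.sum_add_distrib]
          exact Finset.sum_congr rfl fun i _ => by ring
        have h2 : ∑ i, (α i + (μ i : ℝ)) * (v i j : ℝ) = (x j : ℝ) := by
          rw [heq j, ← Finset.sum_add_distrib]
          exact Finset.sum_congr rfl fun i _ => by ring
        rw [h1, h2]
      exact unique_decomp lam β α ν μ hbpos hpos hbatom hatom hνsupp hsupp
        (fun i => by have := congrFun hlameq i; rw [he i, ← this])
        he
  · rintro ⟨α, ⟨⟨hpos, _, _, _⟩, μ, _, heq⟩, _⟩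
    refine ⟨fun i => α i + (μ i : ℝ), fun i => ?_, fun j => ?_⟩
    · show 0 < α i + (μ i : ℝ)
      have h1 : (0 : ℝ) ≤ (μ i : ℝ) := by positivity
      have := hpos i
      linarith
    · rw [heq j, ← Finset.sum_add_distrib]
      exact Finset.sum_congr rfl fun i _ => by ring
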